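/- In a balanced (Eulerian) directed multigraph in which every vertex has out-degree 2, the number of Eulerian circuits starting from a fixed edge equals the number of spanning arborescences rooted at any fixed vertex r. -/

import Mathlib

/-- A finite directed multigraph. -/
structure Multidigraph where
  V : Type
  E : Type
  [fintypeV : Fintype V]
  [fintypeE : Fintype E]
  [decV : DecidableEq V]
  [decE : DecidableEq E]
  src : E → V
  tgt : E → V

attribute [instance] Multidigraph.fintypeV Multidigraph.fintypeE
  Multidigraph.decV Multidigraph.decE

namespace Multidigraph

variable (D : Multidigraph)

noncomputable def outdeg (v : D.V) : ℕ := {e | D.src e = v}.ncard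
noncomputable def indeg (v : D.V) : ℕ := {e | D.tgt e = v}.ncard

/-- Balanced (Eulerian): in-degree equals out-degree at every vertex. -/
def Balanced : Prop := ∀ v, D.indeg v = D.outdeg v

/-- Connectivity of the underlying undirected graph. -/
def Connected : Prop :=
  ∀ u w : D.V, Relation.ReflTransGen
    (fun a b => ∃ e, (D.src e = a ∧ D.tgt e = b) ∨ (D.src e = b ∧ D.tgt e = a)) u w

/-- One step along an edge of `T`. -/
def step (T : Set D.E) (u w : D.V) : Prop := ∃ e ∈ T, D.src e = u ∧ D.tgt e = w

/-- `T` is a spanning arborescence rooted at `r`: every non-root vertex has a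
unique outgoing edge in `T`, the root has none, and every vertex reaches the
root along `T`. -/
def IsArborescence (T : Set D.E) (r : D.V) : Prop :=
  (∀ v, v ≠ r → ∃! e, e ∈ T ∧ D.src e = v) ∧
  (∀ e ∈ T, D.src e ≠ r) ∧
  (∀ v, Relation.ReflTransGen (D.step T) v r)

/-- The arborescence number of `D` with respect to root `r`. -/
noncomputable def arbCount (r : D.V) : ℕ := {T : Set D.E | D.IsArborescence T r}.ncard

/-- An Eulerian circuit starting from the fixed edge `e₀`: a cyclic listing of
all edges, each used exactly once, consecutive edges being head-to-tail. -/
def IsEulerCircuitFrom (e₀ : D.E) (f : ZMod (Fintype.card D.E) ≃ D.E) : Prop :=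
  f 0 = e₀ ∧ ∀ i : ZMod (Fintype.card D.E), D.tgt (f i) = D.src (f (i + 1))

noncomputable def eulerCount (e₀ : D.E) : ℕ :=
  {f : ZMod (Fintype.card D.E) ≃ D.E | D.IsEulerCircuitFrom e₀ f}.ncard

end Multidigraph

namespace BestAux
open Finset Multidigraph

variable {D : Multidigraph}

/-- Circuit predicate (head-to-tail consecutive edges, cyclically). -/
def IsCirc (D : Multidigraph) (g : ZMod (Fintype.card D.E) ≃ D.E) : Prop :=
  ∀ i, D.tgt (g i) = D.src (g (i + 1))

/-- The set of "last exit" edges of a circuit `g`, relative to root `r`. -/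
def lastSet (D : Multidigraph) (g : ZMod (Fintype.card D.E) ≃ D.E) (r : D.V) : Set D.E :=
  {e | D.src e ≠ r ∧
    ∀ m : ZMod (Fintype.card D.E), (g.symm e).val < m.val → D.src (g m) ≠ D.src e}

def outE (D : Multidigraph) (v : D.V) : Finset D.E := univ.filter (fun e => D.src e = v)
def inE (D : Multidigraph) (v : D.V) : Finset D.E := univ.filter (fun e => D.tgt e = v)

lemma card_outE (hout : ∀ v, D.outdeg v = 2) (v : D.V) : (outE D v).card = 2 := by
  have h := hout v
  unfold Multidigraph.outdeg at h
  rwa [show {e | D.src e = v} = ↑(outE D v) by ext e; simp [outE],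
    Set.ncard_coe_finset] at h

lemma card_inE (hbal : D.Balanced) (hout : ∀ v, D.outdeg v = 2) (v : D.V) :
    (inE D v).card = 2 := by
  have h := (hbal v).trans (hout v)
  unfold Multidigraph.indeg at h
  rwa [show {e | D.tgt e = v} = ↑(inE D v) by ext e; simp [inE],
    Set.ncard_coe_finset] at h

lemma exists_out (hout : ∀ v, D.outdeg v = 2) (v : D.V) : ∃ e, D.src e = v := by
  have := card_outE hout v
  have hne : (outE D v).Nonempty := by
    rw [← Finset.card_pos, this]; norm_num
  obtain ⟨e, he⟩ := hne
  exact ⟨e, (Finset.mem_filter.mp he).2⟩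

lemma out_pair (hout : ∀ v, D.outdeg v = 2) {v : D.V} {a b : D.E} (hab : a ≠ b)
    (ha : D.src a = v) (hb : D.src b = v) : ∀ e, D.src e = v → e = a ∨ e = b := by
  have hsub : ({a, b} : Finset D.E) ⊆ outE D v := by
    intro e he
    rcases Finset.mem_insert.mp he with h | h
    · subst h; simp [outE, ha]
    · rw [Finset.mem_singleton.mp h]; simp [outE, hb]
  have hcard : (outE D v).card ≤ ({a, b} : Finset D.E).card := by
    rw [card_outE hout v, Finset.card_pair hab]
  have := Finset.eq_of_subset_of_card_le hsub hcard
  intro e he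
  have : e ∈ ({a, b} : Finset D.E) := this ▸ (by simp [outE, he])
  simpa using this

/-- the other out-edge of `v`, distinct from a given one -/
lemma other_out (hout : ∀ v, D.outdeg v = 2) {v : D.V} {a : D.E} (ha : D.src a = v) :
    ∃ b, b ≠ a ∧ D.src b = v := by
  by_contra h
  push_neg at h
  have h1 : (outE D v) ⊆ {a} := by
    intro e he
    rcases Finset.mem_filter.mp he with ⟨-, hsrc⟩
    by_cases hea : e = a
    · simp [hea]
    · exact absurd hsrc (by simpa using fun hh => hea (by tauto))
  have := (Finset.card_le_card h1).trans_eq (Finset.card_singleton a)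
  rw [card_outE hout v] at this
  omega

end BestAux
namespace BestAux
open Finset Multidigraph

variable {D : Multidigraph}

open scoped Classical in
/-- Greedy choice of the next edge: prefer an unused out-edge not in `T`. -/
noncomputable def pick (D : Multidigraph) (T : Set D.E) (x : D.E) (v : D.V)
    (u : Finset D.E) : D.E :=
  if h : ∃ e, D.src e = v ∧ e ∉ u ∧ e ∉ T then h.choose
  else if h' : ∃ e, D.src e = v ∧ e ∉ u then h'.choose
  else x

/-- The greedy walk together with its set of used edges. -/
noncomputable def walkP (D : Multidigraph) (T : Set D.E) (x : D.E) : ℕ → D.E × Finset D.E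
  | 0 => (x, {x})
  | k + 1 =>
    let p := walkP D T x k
    let e := pick D T x (D.tgt p.1) p.2
    (e, insert e p.2)

noncomputable def walk (D : Multidigraph) (T : Set D.E) (x : D.E) (k : ℕ) : D.E :=
  (walkP D T x k).1

noncomputable def used (D : Multidigraph) (T : Set D.E) (x : D.E) (k : ℕ) : Finset D.E :=
  (walkP D T x k).2

variable {T : Set D.E} {x : D.E}

lemma walk_zero : walk D T x 0 = x := rfl
lemma used_zero : used D T x 0 = {x} := rfl
lemma walk_succ (k : ℕ) :
    walk D T x (k + 1) = pick D T x (D.tgt (walk D T x k)) (used D T x k) := rfl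
lemma used_succ (k : ℕ) :
    used D T x (k + 1) = insert (walk D T x (k + 1)) (used D T x k) := rfl

lemma mem_used {e : D.E} : ∀ {k}, e ∈ used D T x k ↔ ∃ j ≤ k, walk D T x j = e := by
  intro k
  induction k with
  | zero =>
    simp [used_zero, walk_zero, eq_comm]
  | succ k ih =>
    rw [used_succ, Finset.mem_insert, ih]
    constructor
    · rintro (h | ⟨j, hj, hw⟩)
      · exact ⟨k + 1, le_refl _, h.symm⟩
      · exact ⟨j, hj.trans (Nat.le_succ k), hw⟩
    · rintro ⟨j, hj, hw⟩
      rcases Nat.le_succ_iff.mp hj with h | h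
      · exact Or.inr ⟨j, h, hw⟩
      · exact Or.inl (by rw [← hw, h])

lemma used_mono {j k : ℕ} (h : j ≤ k) : used D T x j ⊆ used D T x k := by
  intro e he
  rw [mem_used] at he ⊢
  obtain ⟨i, hi, hw⟩ := he
  exact ⟨i, hi.trans h, hw⟩

lemma walk_mem_used {j k : ℕ} (h : j ≤ k) : walk D T x j ∈ used D T x k :=
  mem_used.mpr ⟨j, h, rfl⟩

lemma pick_spec (v : D.V) (u : Finset D.E) (h' : ∃ e, D.src e = v ∧ e ∉ u) :
    D.src (pick D T x v u) = v ∧ pick D T x v u ∉ u := by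
  unfold pick
  by_cases h1 : ∃ e, D.src e = v ∧ e ∉ u ∧ e ∉ T
  · rw [dif_pos h1]
    exact ⟨h1.choose_spec.1, h1.choose_spec.2.1⟩
  · rw [dif_neg h1, dif_pos h']
    exact ⟨h'.choose_spec.1, h'.choose_spec.2⟩

lemma pick_mem_T (v : D.V) (u : Finset D.E) (hT : pick D T x v u ∈ T) :
    ∀ e, D.src e = v → e ∉ u → e ∈ T := by
  intro e he heu
  by_contra heT
  have h1 : ∃ e, D.src e = v ∧ e ∉ u ∧ e ∉ T := ⟨e, he, heu, heT⟩
  rw [pick, dif_pos h1] at hT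
  exact h1.choose_spec.2.2 hT

/-- The walk is well-behaved up to step `k`. -/
def Good (D : Multidigraph) (T : Set D.E) (x : D.E) (k : ℕ) : Prop :=
  ∀ j < k, D.src (walk D T x (j + 1)) = D.tgt (walk D T x j) ∧
    walk D T x (j + 1) ∉ used D T x j

lemma Good.mono {j k : ℕ} (h : j ≤ k) (hg : Good D T x k) : Good D T x j :=
  fun i hi => hg i (lt_of_lt_of_le hi h)

lemma Good.inj {k : ℕ} (hg : Good D T x k) :
    ∀ i ≤ k, ∀ j ≤ k, walk D T x i = walk D T x j → i = j := by
  have key : ∀ i j, j ≤ k → i < j → walk D T x i ≠ walk D T x j := by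
    intro i j hj hij
    obtain ⟨m, rfl⟩ : ∃ m, j = m + 1 := ⟨j - 1, by omega⟩
    intro he
    exact (hg m (by omega)).2 (he ▸ walk_mem_used (by omega))
  intro i hi j hj he
  rcases lt_trichotomy i j with h | h | h
  · exact absurd he (key i j hj h)
  · exact h
  · exact absurd he.symm (key j i hi h)

lemma card_used {k : ℕ} (hg : Good D T x k) : (used D T x k).card = k + 1 := by
  induction k with
  | zero => simp [used_zero]
  | succ k ih =>
    rw [used_succ, Finset.card_insert_of_notMem, ih (hg.mono (Nat.le_succ k))]
    exact (hg k (Nat.lt_succ_self k)).2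

end BestAux
namespace BestAux
open Finset Multidigraph

variable {D : Multidigraph} {T : Set D.E} {x : D.E} {r : D.V}

lemma filter_range_succ_card (p : ℕ → Prop) [DecidablePred p] (k : ℕ) :
    ((range (k + 1)).filter p).card
      = ((range k).filter p).card + (if p k then 1 else 0) := by
  rw [Finset.range_add_one, Finset.filter_insert]
  split_ifs with h
  · rw [Finset.card_insert_of_notMem (by simp)]
  · simp

lemma countA (hx : D.src x = r) {k : ℕ} (hg : Good D T x k) (z : D.V) :
    ((range (k + 1)).filter (fun j => D.src (walk D T x j) = z)).card
      = (if z = r then 1 else 0)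
        + ((range k).filter (fun j => D.tgt (walk D T x j) = z)).card := by
  induction k with
  | zero =>
    rw [filter_range_succ_card (fun j => D.src (walk D T x j) = z) 0]
    simp only [Finset.range_zero, Finset.filter_empty, Finset.card_empty, zero_add,
      add_zero, walk_zero, hx]
    by_cases hzr : z = r
    · rw [if_pos hzr, if_pos hzr.symm]
    · rw [if_neg hzr, if_neg (fun h => hzr h.symm)]
  | succ k ih =>
    have hsrc : D.src (walk D T x (k + 1)) = D.tgt (walk D T x k) :=
      (hg k (Nat.lt_succ_self k)).1
    have ih' := ih (hg.mono (Nat.le_succ k))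
    rw [filter_range_succ_card, ih', filter_range_succ_card
      (fun j => D.tgt (walk D T x j) = z) k, hsrc]
    ring

lemma used_eq_image {k : ℕ} :
    used D T x k = (range (k + 1)).image (walk D T x) := by
  ext e
  simp only [mem_used, Finset.mem_image, Finset.mem_range, Nat.lt_succ_iff]

lemma card_filter_eq {k : ℕ} (hg : Good D T x k) (p : D.E → Prop) [DecidablePred p] :
    ((used D T x k).filter p).card
      = ((range (k + 1)).filter (fun j => p (walk D T x j))).card := by
  rw [used_eq_image, Finset.filter_image]
  apply Finset.card_image_of_injOn
  intro i hi j hj hij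
  have hi' := Finset.mem_range.mp (Finset.mem_filter.mp hi).1
  have hj' := Finset.mem_range.mp (Finset.mem_filter.mp hj).1
  exact hg.inj i (by omega) j (by omega) hij

lemma stuck_at_r (hout : ∀ v, D.outdeg v = 2) (hbal : D.Balanced)
    (hx : D.src x = r) {k : ℕ} (hg : Good D T x k)
    (hstuck : ∀ e, D.src e = D.tgt (walk D T x k) → e ∈ used D T x k) :
    D.tgt (walk D T x k) = r ∧ ∀ e, D.tgt e = r → e ∈ used D T x k := by
  set v := D.tgt (walk D T x k) with hv
  have hofull : (used D T x k).filter (fun e => D.src e = v) = outE D v := by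
    apply Finset.Subset.antisymm
    · intro e he
      simp only [outE, Finset.mem_filter, Finset.mem_univ, true_and]
      exact (Finset.mem_filter.mp he).2
    · intro e he
      have hsrc : D.src e = v := (Finset.mem_filter.mp he).2
      exact Finset.mem_filter.mpr ⟨hstuck e hsrc, hsrc⟩
  have h2 : ((range (k + 1)).filter (fun j => D.src (walk D T x j) = v)).card = 2 := by
    rw [← card_filter_eq hg (fun e => D.src e = v), hofull, card_outE hout]
  have hA := countA hx hg v
  have h3 : ((range (k + 1)).filter (fun j => D.tgt (walk D T x j) = v)).card
      = ((range k).filter (fun j => D.tgt (walk D T x j) = v)).card + 1 := by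
    rw [filter_range_succ_card (fun j => D.tgt (walk D T x j) = v) k, if_pos hv.symm]
  have h4 : ((range (k + 1)).filter (fun j => D.tgt (walk D T x j) = v)).card ≤ 2 := by
    rw [← card_filter_eq hg (fun e => D.tgt e = v)]
    calc ((used D T x k).filter (fun e => D.tgt e = v)).card
        ≤ (inE D v).card := by
          apply Finset.card_le_card
          intro e he
          simp only [inE, Finset.mem_filter, Finset.mem_univ, true_and]
          exact (Finset.mem_filter.mp he).2
      _ = 2 := card_inE hbal hout v
  by_cases hvr : v = r
  · subst hvr
    refine ⟨rfl, ?_⟩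
    rw [if_pos rfl] at hA
    have hX : ((range (k + 1)).filter (fun j => D.tgt (walk D T x j) = v)).card = 2 := by
      omega
    have hXc : ((used D T x k).filter (fun e => D.tgt e = v)).card = 2 := by
      rw [card_filter_eq hg (fun e => D.tgt e = v)]; exact hX
    have hifull : (used D T x k).filter (fun e => D.tgt e = v) = inE D v := by
      apply Finset.eq_of_subset_of_card_le
      · intro e he
        simp only [inE, Finset.mem_filter, Finset.mem_univ, true_and]
        exact (Finset.mem_filter.mp he).2
      · rw [hXc, card_inE hbal hout]
    intro e he
    have : e ∈ inE D v := by
      simp only [inE, Finset.mem_filter, Finset.mem_univ, true_and]; exact he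
    rw [← hifull] at this
    exact (Finset.mem_filter.mp this).1
  · rw [if_neg hvr] at hA
    omega

lemma out_eq_in_used (hx : D.src x = r) {k : ℕ} (hg : Good D T x k)
    (hend : D.tgt (walk D T x k) = r) {z : D.V} (hz : z ≠ r) :
    ((used D T x k).filter (fun e => D.src e = z)).card
      = ((used D T x k).filter (fun e => D.tgt e = z)).card := by
  rw [card_filter_eq hg (fun e => D.src e = z), card_filter_eq hg (fun e => D.tgt e = z),
    countA hx hg z, if_neg hz, zero_add,
    filter_range_succ_card (fun j => D.tgt (walk D T x j) = z) k,
    if_neg (by rw [hend]; exact fun h => hz h.symm), add_zero]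

lemma all_used (harb : D.IsArborescence T r) (hout : ∀ v, D.outdeg v = 2)
    (hbal : D.Balanced) (hx : D.src x = r) {k : ℕ} (hg : Good D T x k)
    (hend : D.tgt (walk D T x k) = r)
    (hor : ∀ e, D.src e = r → e ∈ used D T x k)
    (hir : ∀ e, D.tgt e = r → e ∈ used D T x k) :
    ∀ e, e ∈ used D T x k := by
  have main : ∀ z, Relation.ReflTransGen (D.step T) z r →
      ∀ e, D.src e = z → e ∈ used D T x k := by
    intro z hz
    induction hz using Relation.ReflTransGen.head_induction_on with
    | refl => exact hor
    | head hstep hrest ih =>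
      rename_i a c
      intro e he
      by_contra heu
      obtain ⟨eT, heT, heTsrc, heTtgt⟩ := hstep
      have haR : a ≠ r := heTsrc ▸ harb.2.1 eT heT
      have heTu : eT ∉ used D T x k := by
        intro hmem
        obtain ⟨j, hj, hw⟩ := mem_used.mp hmem
        have hj0 : j ≠ 0 := by
          intro h0
          subst h0
          rw [walk_zero] at hw
          exact haR (heTsrc ▸ hw ▸ hx)
        obtain ⟨m, rfl⟩ : ∃ m, j = m + 1 := ⟨j - 1, by omega⟩
        have hmk : m < k := by omega
        have hTsrc2 : D.tgt (walk D T x m) = a := by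
          rw [← (hg m hmk).1, hw, heTsrc]
        have hpmem : pick D T x (D.tgt (walk D T x m)) (used D T x m) ∈ T := by
          rw [← walk_succ, hw]; exact heT
        have heinT : e ∈ T := by
          apply pick_mem_T _ _ hpmem e (by rw [hTsrc2, he])
          intro hmem'
          exact heu (used_mono (by omega) hmem')
        have := (harb.1 a haR).unique ⟨heinT, he⟩ ⟨heT, heTsrc⟩
        rw [this] at heu
        exact heu hmem
      by_cases hcr : c = r
      · exact heTu (hir eT (hcr ▸ heTtgt))
      · have hino : ((used D T x k).filter (fun e => D.tgt e = c)).card < 2 := by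
          have hsub : (used D T x k).filter (fun e => D.tgt e = c) ⊆ (inE D c).erase eT := by
            intro e' he'
            have h1 := Finset.mem_filter.mp he'
            apply Finset.mem_erase.mpr
            refine ⟨?_, ?_⟩
            · intro hh; exact heTu (hh ▸ h1.1)
            · simp only [inE, Finset.mem_filter, Finset.mem_univ, true_and]
              exact h1.2
          calc ((used D T x k).filter (fun e => D.tgt e = c)).card
              ≤ ((inE D c).erase eT).card := Finset.card_le_card hsub
            _ = (inE D c).card - 1 := Finset.card_erase_of_mem (by
                simp only [inE, Finset.mem_filter, Finset.mem_univ, true_and]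
                exact heTtgt)
            _ < 2 := by rw [card_inE hbal hout]; omega
        have houto : ((used D T x k).filter (fun e => D.src e = c)).card < 2 :=
          (out_eq_in_used hx hg hend hcr) ▸ hino
        have : ∃ e', D.src e' = c ∧ e' ∉ used D T x k := by
          by_contra hh
          push_neg at hh
          have : (used D T x k).filter (fun e => D.src e = c) = outE D c := by
            apply Finset.Subset.antisymm
            · intro e' he'
              simp only [outE, Finset.mem_filter, Finset.mem_univ, true_and]
              exact (Finset.mem_filter.mp he').2
            · intro e' he'
              have hsrc : D.src e' = c := (Finset.mem_filter.mp he').2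
              exact Finset.mem_filter.mpr ⟨hh e' hsrc, hsrc⟩
          rw [this, card_outE hout] at houto
          omega
        obtain ⟨e', he', heu'⟩ := this
        exact heu' (ih e' he')
  intro e
  exact main (D.src e) (harb.2.2 (D.src e)) e rfl

lemma good_all (harb : D.IsArborescence T r) (hout : ∀ v, D.outdeg v = 2)
    (hbal : D.Balanced) (hx : D.src x = r) :
    ∀ k, k < Fintype.card D.E → Good D T x k := by
  intro k
  induction k with
  | zero => exact fun _ j hj => absurd hj (Nat.not_lt_zero j)
  | succ k ih =>
    intro hk
    have hgk := ih (by omega)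
    intro j hj
    rcases Nat.lt_succ_iff_lt_or_eq.mp hj with h | h
    · exact hgk j h
    · subst h
      have hnot : ∃ e, D.src e = D.tgt (walk D T x j) ∧ e ∉ used D T x j := by
        by_contra hstuck
        push_neg at hstuck
        have h1 := stuck_at_r hout hbal hx hgk hstuck
        have hor : ∀ e, D.src e = r → e ∈ used D T x j := by
          rw [← h1.1]; exact hstuck
        have h2 := all_used harb hout hbal hx hgk h1.1 hor h1.2
        have h3 : used D T x j = univ := Finset.eq_univ_iff_forall.mpr h2
        have h4 : (used D T x j).card = Fintype.card D.E := by
          rw [h3, Finset.card_univ]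
        rw [card_used hgk] at h4
        omega
      rw [walk_succ]
      exact pick_spec _ _ hnot

lemma walk_closes (harb : D.IsArborescence T r) (hout : ∀ v, D.outdeg v = 2)
    (hbal : D.Balanced) (hx : D.src x = r) (hn : 0 < Fintype.card D.E) :
    D.tgt (walk D T x (Fintype.card D.E - 1)) = r ∧
      ∀ e, e ∈ used D T x (Fintype.card D.E - 1) := by
  have hg := good_all harb hout hbal hx (Fintype.card D.E - 1) (by omega)
  have hfull : used D T x (Fintype.card D.E - 1) = univ := by
    apply Finset.eq_univ_of_card
    rw [card_used hg]
    omega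
  have hstuck : ∀ e, D.src e = D.tgt (walk D T x (Fintype.card D.E - 1)) →
      e ∈ used D T x (Fintype.card D.E - 1) := fun e _ => hfull ▸ Finset.mem_univ e
  have h1 := stuck_at_r hout hbal hx hg hstuck
  exact ⟨h1.1, fun e => hfull ▸ Finset.mem_univ e⟩

end BestAux
namespace BestAux
open Finset Multidigraph

variable {D : Multidigraph} {T : Set D.E} {x : D.E} {r : D.V}

/-- From an arborescence `T` and a starting edge `x` out of `r`, the greedy
walk yields an Eulerian circuit whose last-exit set is `T`. -/
lemma exists_circ (harb : D.IsArborescence T r) (hout : ∀ v, D.outdeg v = 2)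
    (hbal : D.Balanced) (hx : D.src x = r) (hn : 0 < Fintype.card D.E) :
    ∃ g : ZMod (Fintype.card D.E) ≃ D.E,
      IsCirc D g ∧ D.src (g 0) = r ∧ lastSet D g r = T ∧ g 0 = x := by
  haveI : NeZero (Fintype.card D.E) := ⟨hn.ne'⟩
  set N := Fintype.card D.E with hN
  have hg := good_all harb hout hbal hx (N - 1) (by omega)
  have hclose := walk_closes harb hout hbal hx hn
  have hinj : Function.Injective (fun i : ZMod N => walk D T x i.val) := by
    intro i j hij
    have h1 := ZMod.val_lt i
    have h2 := ZMod.val_lt j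
    have := hg.inj i.val (by omega) j.val (by omega) hij
    exact ZMod.val_injective N this
  have hbij : Function.Bijective (fun i : ZMod N => walk D T x i.val) := by
    rw [Fintype.bijective_iff_injective_and_card]
    exact ⟨hinj, by rw [ZMod.card]⟩
  refine ⟨Equiv.ofBijective _ hbij, ?_, ?_, ?_, ?_⟩
  · -- IsCirc
    intro i
    show D.tgt (walk D T x i.val) = D.src (walk D T x (i + 1).val)
    have hv1 : (i + 1).val = (i.val + 1) % N := by
      conv_lhs => rw [← ZMod.natCast_rightInverse i, ← Nat.cast_one (R := ZMod N),
        ← Nat.cast_add]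
      exact ZMod.val_natCast _ _
    have hivlt := ZMod.val_lt i
    rcases Nat.lt_or_ge (i.val + 1) N with hlt | hge
    · rw [hv1, Nat.mod_eq_of_lt hlt]
      exact ((hg i.val (by omega)).1).symm
    · have hie : i.val = N - 1 := by omega
      have : (i.val + 1) % N = 0 := by
        rw [hie]; rw [show N - 1 + 1 = N by omega, Nat.mod_self]
      rw [hv1, this, walk_zero, hx, hie]
      exact hclose.1
  · -- src (g 0) = r
    show D.src (walk D T x (0 : ZMod N).val) = r
    rw [ZMod.val_zero, walk_zero, hx]
  · -- lastSet = T
    set g := Equiv.ofBijective _ hbij with hgdef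
    have hgapp : ∀ i : ZMod N, g i = walk D T x i.val := fun i => rfl
    have hsymm : ∀ (j : ℕ), j < N → (g.symm (walk D T x j)).val = j := by
      intro j hj
      have : g ((j : ℕ) : ZMod N) = walk D T x j := by
        rw [hgapp, ZMod.val_cast_of_lt hj]
      rw [← this, Equiv.symm_apply_apply, ZMod.val_cast_of_lt hj]
    have husedall : ∀ e : D.E, ∃ j ≤ N - 1, walk D T x j = e := by
      intro e
      exact mem_used.mp (hclose.2 e)
    have treeMem : ∀ t ∈ T, t ∈ lastSet D g r := by
      intro t htT
      have hst : D.src t ≠ r := harb.2.1 t htT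
      set v := D.src t with hvdef
      obtain ⟨j1, hj1, hw1⟩ := husedall t
      have hj10 : j1 ≠ 0 := by
        intro h0
        rw [h0, walk_zero] at hw1
        refine hst ?_
        show D.src t = r
        rw [← hw1]; exact hx
      obtain ⟨m, rfl⟩ : ∃ m, j1 = m + 1 := ⟨j1 - 1, by omega⟩
      obtain ⟨u, hut, hsu⟩ := other_out hout (rfl : D.src t = v)
      have huT : u ∉ T := by
        intro huT
        exact hut ((harb.1 v hst).unique ⟨huT, hsu⟩ ⟨htT, rfl⟩)
      obtain ⟨j2, hj2, hw2⟩ := husedall u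
      have hmN : m < N - 1 := by omega
      have hj2m : j2 ≤ m := by
        have hpmem : pick D T x (D.tgt (walk D T x m)) (used D T x m) ∈ T := by
          rw [← walk_succ, hw1]; exact htT
        have hsrcu : D.src u = D.tgt (walk D T x m) := by
          rw [← (hg m hmN).1, hw1, hsu]
        by_contra hgt
        have humem : u ∉ used D T x m := by
          intro hmem
          obtain ⟨j', hj', hw'⟩ := mem_used.mp hmem
          have : j' = j2 := hg.inj j' (by omega) j2 (by omega) (hw'.trans hw2.symm)
          omega
        exact huT (pick_mem_T _ _ hpmem u hsrcu humem)
      refine ⟨hst, ?_⟩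
      intro mm hmm hsrc
      have hmmlt := ZMod.val_lt mm
      rw [← hw1, hsymm (m + 1) (by omega)] at hmm
      rw [hgapp] at hsrc
      rcases out_pair hout hut hsu rfl (walk D T x mm.val) hsrc with h | h
      · have : mm.val = j2 := hg.inj mm.val (by omega) j2 (by omega) (h.trans hw2.symm)
        omega
      · have : mm.val = m + 1 := hg.inj mm.val (by omega) (m + 1) (by omega) (h.trans hw1.symm)
        omega
    apply Set.eq_of_subset_of_subset
    · -- lastSet ⊆ T
      rintro e ⟨hne, hmax⟩
      obtain ⟨t, ⟨htT, hts⟩, huniq⟩ := harb.1 (D.src e) hne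
      obtain ⟨hne', hmax'⟩ := treeMem t htT
      have : e = t := by
        rcases lt_trichotomy (g.symm e).val (g.symm t).val with h | h | h
        · exact absurd (by rw [Equiv.apply_symm_apply, hts]) (hmax (g.symm t) h)
        · have := ZMod.val_injective N h
          rw [← Equiv.apply_symm_apply g e, this, Equiv.apply_symm_apply]
        · exact absurd (by rw [Equiv.apply_symm_apply, hts]) (hmax' (g.symm e) h)
      rw [this]; exact htT
    · intro t htT
      exact treeMem t htT
  · show walk D T x (0 : ZMod N).val = x
    rw [ZMod.val_zero, walk_zero]

end BestAux
namespace BestAux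
open Finset Multidigraph

variable {D : Multidigraph} {r : D.V}

lemma lastSet_unique (hn : 0 < Fintype.card D.E) {g : ZMod (Fintype.card D.E) ≃ D.E}
    {e e' : D.E} (he : e ∈ lastSet D g r) (he' : e' ∈ lastSet D g r)
    (hss : D.src e = D.src e') : e = e' := by
  haveI : NeZero (Fintype.card D.E) := ⟨hn.ne'⟩
  rcases lt_trichotomy (g.symm e).val (g.symm e').val with h | h | h
  · exact absurd (by rw [Equiv.apply_symm_apply, hss]) (he.2 (g.symm e') h)
  · have := ZMod.val_injective _ h
    rw [← Equiv.apply_symm_apply g e, this, Equiv.apply_symm_apply]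
  · exact absurd (by rw [Equiv.apply_symm_apply, ← hss]) (he'.2 (g.symm e) h)

lemma lastSet_arb (hout : ∀ v, D.outdeg v = 2) (hn : 0 < Fintype.card D.E)
    {g : ZMod (Fintype.card D.E) ≃ D.E} (hg : IsCirc D g) (hg0 : D.src (g 0) = r) :
    D.IsArborescence (lastSet D g r) r := by
  haveI : NeZero (Fintype.card D.E) := ⟨hn.ne'⟩
  set J : D.V → Finset ℕ :=
    fun v => (range (Fintype.card D.E)).filter (fun m => D.src (g ((m : ℕ) : ZMod (Fintype.card D.E))) = v) with hJ
  have hJne : ∀ v, (J v).Nonempty := by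
    intro v
    obtain ⟨e, he⟩ := exists_out hout v
    refine ⟨(g.symm e).val, ?_⟩
    simp only [hJ, Finset.mem_filter, Finset.mem_range]
    refine ⟨ZMod.val_lt _, ?_⟩
    rw [ZMod.natCast_rightInverse (g.symm e), Equiv.apply_symm_apply]
    exact he
  set L : D.V → ℕ := fun v => (J v).max' (hJne v) with hL
  have hLmem : ∀ v, L v < (Fintype.card D.E) ∧ D.src (g ((L v : ℕ) : ZMod (Fintype.card D.E))) = v := by
    intro v
    have := (J v).max'_mem (hJne v)
    simp only [hJ, Finset.mem_filter, Finset.mem_range] at this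
    exact this
  have hLmax : ∀ v (m : ℕ), m < (Fintype.card D.E) → D.src (g ((m : ℕ) : ZMod (Fintype.card D.E))) = v → m ≤ L v := by
    intro v m hm hsrc
    apply Finset.le_max'
    simp only [hJ, Finset.mem_filter, Finset.mem_range]
    exact ⟨hm, hsrc⟩
  have hlastMem : ∀ v, v ≠ r → g ((L v : ℕ) : ZMod (Fintype.card D.E)) ∈ lastSet D g r := by
    intro v hv
    refine ⟨by rw [(hLmem v).2]; exact hv, ?_⟩
    intro mm hmm hsrc
    rw [Equiv.symm_apply_apply, ZMod.val_cast_of_lt (hLmem v).1] at hmm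
    rw [(hLmem v).2] at hsrc
    have : mm.val ≤ L v := by
      apply hLmax v mm.val (ZMod.val_lt mm)
      rw [ZMod.natCast_rightInverse mm]
      exact hsrc
    omega
  refine ⟨?_, ?_, ?_⟩
  · intro v hv
    refine ⟨g ((L v : ℕ) : ZMod (Fintype.card D.E)), ⟨hlastMem v hv, (hLmem v).2⟩, ?_⟩
    rintro e' ⟨he', hsrc'⟩
    exact lastSet_unique hn he' (hlastMem v hv) (by rw [hsrc', (hLmem v).2])
  · rintro e ⟨hne, -⟩
    exact hne
  · have key : ∀ d : ℕ, ∀ v, v ≠ r → (Fintype.card D.E) ≤ L v + d →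
        Relation.ReflTransGen (D.step (lastSet D g r)) v r := by
      intro d
      induction d with
      | zero => intro v hv hle; exact absurd hle (by have := (hLmem v).1; omega)
      | succ d ih =>
        intro v hv hle
        set t := g ((L v : ℕ) : ZMod (Fintype.card D.E)) with ht
        have hstep : D.step (lastSet D g r) v (D.tgt t) :=
          ⟨t, hlastMem v hv, (hLmem v).2, rfl⟩
        by_cases hwr : D.tgt t = r
        · exact Relation.ReflTransGen.single (hwr ▸ hstep)
        · have hcirc := hg ((L v : ℕ) : ZMod (Fintype.card D.E))
          rcases Nat.lt_or_ge (L v + 1) (Fintype.card D.E) with hlt | hge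
          · have hcast : ((L v : ℕ) : ZMod (Fintype.card D.E)) + 1 = ((L v + 1 : ℕ) : ZMod (Fintype.card D.E)) := by
              push_cast; ring
            have hsrcw : D.src (g ((L v + 1 : ℕ) : ZMod (Fintype.card D.E))) = D.tgt t := by
              rw [← hcast, ← hcirc]
            have hLw : L v + 1 ≤ L (D.tgt t) := hLmax _ _ hlt hsrcw
            have hw : Relation.ReflTransGen (D.step (lastSet D g r)) (D.tgt t) r :=
              ih (D.tgt t) hwr (by omega)
            exact Relation.ReflTransGen.head hstep hw
          · exfalso
            have hLv : L v = (Fintype.card D.E) - 1 := by have := (hLmem v).1; omega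
            have hcast : ((L v : ℕ) : ZMod (Fintype.card D.E)) + 1 = 0 := by
              rw [hLv]
              rw [show (((Fintype.card D.E) - 1 : ℕ) : ZMod (Fintype.card D.E)) + 1 = (((Fintype.card D.E) - 1 + 1 : ℕ) : ZMod (Fintype.card D.E)) by push_cast; ring]
              rw [show (Fintype.card D.E) - 1 + 1 = (Fintype.card D.E) by omega]
              exact ZMod.natCast_self (Fintype.card D.E)
            rw [hcast] at hcirc
            exact hwr (hcirc.symm ▸ hg0 ▸ rfl)
    intro v
    by_cases hv : v = r
    · exact hv ▸ Relation.ReflTransGen.refl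
    · exact key (Fintype.card D.E) v hv (by omega)

lemma circ_det (hout : ∀ v, D.outdeg v = 2) (hn : 0 < Fintype.card D.E)
    {g g' : ZMod (Fintype.card D.E) ≃ D.E} (hg : IsCirc D g) (hg' : IsCirc D g')
    (h0 : g 0 = g' 0) (hr : D.src (g 0) = r)
    (hT : lastSet D g r = lastSet D g' r) : g = g' := by
  haveI : NeZero (Fintype.card D.E) := ⟨hn.ne'⟩
  have key : ∀ k, k < (Fintype.card D.E) → g ((k : ℕ) : ZMod (Fintype.card D.E)) = g' ((k : ℕ) : ZMod (Fintype.card D.E)) := by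
    intro k
    induction k using Nat.strong_induction_on with
    | _ k ih =>
      intro hk
      match k with
      | 0 => simpa using h0
      | (m + 1) =>
        have hmN : m < (Fintype.card D.E) := by omega
        have ihm := ih m (by omega) hmN
        set a := g ((m + 1 : ℕ) : ZMod (Fintype.card D.E)) with ha
        set b := g' ((m + 1 : ℕ) : ZMod (Fintype.card D.E)) with hb
        have hsa : D.src a = D.tgt (g ((m : ℕ) : ZMod (Fintype.card D.E))) := by
          rw [ha, show ((m + 1 : ℕ) : ZMod (Fintype.card D.E)) = ((m : ℕ) : ZMod (Fintype.card D.E)) + 1 by push_cast; ring,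
            ← hg ((m : ℕ) : ZMod (Fintype.card D.E))]
        have hsb : D.src b = D.tgt (g ((m : ℕ) : ZMod (Fintype.card D.E))) := by
          rw [hb, show ((m + 1 : ℕ) : ZMod (Fintype.card D.E)) = ((m : ℕ) : ZMod (Fintype.card D.E)) + 1 by push_cast; ring,
            ← hg' ((m : ℕ) : ZMod (Fintype.card D.E)), ihm]
        set v := D.tgt (g ((m : ℕ) : ZMod (Fintype.card D.E))) with hv
        by_contra hab
        have hvalm1 : (((m + 1 : ℕ)) : ZMod (Fintype.card D.E)).val = m + 1 := ZMod.val_cast_of_lt hk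
        by_cases hvr : v = r
        · have hane : a ≠ g 0 := by
            intro hh
            have h1 : ((m + 1 : ℕ) : ZMod (Fintype.card D.E)) = 0 := g.injective (ha ▸ hh)
            have h2 : (((m + 1 : ℕ)) : ZMod (Fintype.card D.E)).val = (0 : ZMod (Fintype.card D.E)).val := by rw [h1]
            rw [hvalm1, ZMod.val_zero] at h2
            omega
          have hbne : b ≠ g 0 := by
            rw [h0]
            intro hh
            have h1 : ((m + 1 : ℕ) : ZMod (Fintype.card D.E)) = 0 := g'.injective (hb ▸ hh)
            have h2 : (((m + 1 : ℕ)) : ZMod (Fintype.card D.E)).val = (0 : ZMod (Fintype.card D.E)).val := by rw [h1]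
            rw [hvalm1, ZMod.val_zero] at h2
            omega
          rcases out_pair hout hab hsa hsb (g 0) (by rw [hr, hvr]) with h | h
          · exact hane h.symm
          · exact hbne h.symm
        · obtain ⟨t, ⟨htmem, htsrc⟩, -⟩ := (lastSet_arb hout hn hg hr).1 v hvr
          have htmem' : t ∈ lastSet D g' r := hT ▸ htmem
          rcases out_pair hout hab hsa hsb t htsrc with hta | htb
          · have hsymm_t : (g.symm t).val = m + 1 := by
              rw [hta, ha, Equiv.symm_apply_apply, hvalm1]
            have hj2lt : (g.symm b).val < (Fintype.card D.E) := ZMod.val_lt _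
            have hgj2 : g (((g.symm b).val : ℕ) : ZMod (Fintype.card D.E)) = b := by
              rw [ZMod.natCast_rightInverse, Equiv.apply_symm_apply]
            have hj2le : (g.symm b).val ≤ m := by
              by_contra hgt
              rcases (by omega : (g.symm b).val = m + 1 ∨ m + 1 < (g.symm b).val) with hh | hh
              · apply hab
                rw [ha, ← hgj2, hh]
              · have hnot := htmem.2 (g.symm b) (by rw [hsymm_t]; exact hh)
                rw [Equiv.apply_symm_apply] at hnot
                exact hnot (hsb.trans htsrc.symm)
            have hih := ih (g.symm b).val (by omega) (by omega)
            rw [hgj2] at hih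
            have h1 : (((g.symm b).val : ℕ) : ZMod (Fintype.card D.E)) = ((m + 1 : ℕ) : ZMod (Fintype.card D.E)) :=
              g'.injective (hih.symm.trans hb)
            have h2 : (g.symm b).val = m + 1 := by
              have h3 := congrArg ZMod.val h1
              rwa [ZMod.val_cast_of_lt hj2lt, hvalm1] at h3
            omega
          · have hsymm_t : (g'.symm t).val = m + 1 := by
              rw [htb, hb, Equiv.symm_apply_apply, hvalm1]
            have hj2lt : (g'.symm a).val < (Fintype.card D.E) := ZMod.val_lt _
            have hgj2 : g' (((g'.symm a).val : ℕ) : ZMod (Fintype.card D.E)) = a := by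
              rw [ZMod.natCast_rightInverse, Equiv.apply_symm_apply]
            have hj2le : (g'.symm a).val ≤ m := by
              by_contra hgt
              rcases (by omega : (g'.symm a).val = m + 1 ∨ m + 1 < (g'.symm a).val) with hh | hh
              · apply hab
                rw [hb, ← hgj2, hh]
              · have hnot := htmem'.2 (g'.symm a) (by rw [hsymm_t]; exact hh)
                rw [Equiv.apply_symm_apply] at hnot
                exact hnot (hsa.trans htsrc.symm)
            have hih := ih (g'.symm a).val (by omega) (by omega)
            rw [hgj2] at hih
            have h1 : (((g'.symm a).val : ℕ) : ZMod (Fintype.card D.E)) = ((m + 1 : ℕ) : ZMod (Fintype.card D.E)) :=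
              g.injective (hih.trans ha)
            have h2 : (g'.symm a).val = m + 1 := by
              have h3 := congrArg ZMod.val h1
              rwa [ZMod.val_cast_of_lt hj2lt, hvalm1] at h3
            omega
  apply Equiv.ext
  intro i
  have := key i.val (ZMod.val_lt i)
  rwa [ZMod.natCast_rightInverse i] at this

end BestAux
/-- In a balanced (Eulerian) connected directed multigraph in
which every vertex has out-degree `2`, the number of Eulerian circuits starting
from a fixed edge equals the number of spanning arborescences rooted at any
fixed vertex `r`. -/
theorem euler_circuits_eq_arborescences (D : Multidigraph)
    (hconn : D.Connected) (hbal : D.Balanced)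
    (hout : ∀ v, D.outdeg v = 2)
    (e₀ : D.E) (r : D.V) :
    D.eulerCount e₀ = D.arbCount r := by
  classical
  have hn : 0 < Fintype.card D.E := by
    have h2 := hout r
    unfold Multidigraph.outdeg at h2
    by_contra h
    haveI : IsEmpty D.E := Fintype.card_eq_zero_iff.mp (by omega)
    rw [Set.eq_empty_of_isEmpty {e : D.E | D.src e = r}, Set.ncard_empty] at h2
    omega
  haveI : NeZero (Fintype.card D.E) := ⟨hn.ne'⟩
  set A : Set (ZMod (Fintype.card D.E) ≃ D.E) := {f | D.IsEulerCircuitFrom e₀ f} with hA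
  set B : Set D.E := {e | D.src e = r} with hB
  set S : Set (ZMod (Fintype.card D.E) ≃ D.E) :=
    {g | BestAux.IsCirc D g ∧ D.src (g 0) = r} with hS
  set Arb : Set (Set D.E) := {T | D.IsArborescence T r} with hArb
  set Φ : (ZMod (Fintype.card D.E) ≃ D.E) × D.E → (ZMod (Fintype.card D.E) ≃ D.E) :=
    fun p => (Equiv.addRight (p.1.symm p.2)).trans p.1 with hΦ
  have hΦapp : ∀ p i, Φ p i = p.1 (i + p.1.symm p.2) := fun p i => rfl
  -- recovery of the pair from a rotated circuit
  have hrec : ∀ p ∈ A ×ˢ B, p.2 = Φ p 0 ∧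
      p.1 = (Equiv.addRight ((Φ p).symm e₀)).trans (Φ p) := by
    rintro ⟨f, e⟩ ⟨hfA, heB⟩
    have h2 : Φ (f, e) 0 = e := by
      rw [hΦapp, zero_add, Equiv.apply_symm_apply]
    refine ⟨h2.symm, ?_⟩
    have hsymm : (Φ (f, e)).symm e₀ = -(f.symm e) := by
      have : Φ (f, e) (-(f.symm e)) = e₀ := by
        rw [hΦapp, neg_add_cancel]
        exact hfA.1
      rw [← this, Equiv.symm_apply_apply]
    apply Equiv.ext
    intro i
    rw [Equiv.trans_apply, Equiv.coe_addRight, hsymm, hΦapp]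
    congr 1
    ring
  have hinjΦ : Set.InjOn Φ (A ×ˢ B) := by
    intro p hp q hq hpq
    obtain ⟨h1, h2⟩ := hrec p hp
    obtain ⟨h3, h4⟩ := hrec q hq
    rw [hpq] at h1 h2
    rw [← h3] at h1
    rw [← h4] at h2
    exact Prod.ext h2 h1
  have himgΦ : Φ '' (A ×ˢ B) = S := by
    apply Set.eq_of_subset_of_subset
    · rintro _ ⟨⟨f, e⟩, ⟨hfA, heB⟩, rfl⟩
      constructor
      · intro i
        rw [hΦapp, hΦapp]
        rw [show i + 1 + f.symm e = (i + f.symm e) + 1 by ring]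
        exact hfA.2 (i + f.symm e)
      · rw [hΦapp, zero_add, Equiv.apply_symm_apply]
        exact heB
    · intro g hgS
      refine ⟨((Equiv.addRight (g.symm e₀)).trans g, g 0), ⟨?_, hgS.2⟩, ?_⟩
      · constructor
        · show g (0 + g.symm e₀) = e₀
          rw [zero_add, Equiv.apply_symm_apply]
        · intro i
          show D.tgt (g (i + g.symm e₀)) = D.src (g (i + 1 + g.symm e₀))
          rw [show i + 1 + g.symm e₀ = (i + g.symm e₀) + 1 by ring]
          exact hgS.1 (i + g.symm e₀)
      · set f : ZMod (Fintype.card D.E) ≃ D.E := (Equiv.addRight (g.symm e₀)).trans g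
          with hf
        have hfsymm : f.symm (g 0) = -(g.symm e₀) := by
          have : f (-(g.symm e₀)) = g 0 := by
            show g (-(g.symm e₀) + g.symm e₀) = g 0
            rw [neg_add_cancel]
          rw [← this, Equiv.symm_apply_apply]
        apply Equiv.ext
        intro i
        rw [hΦapp]
        show g (i + f.symm (g 0) + g.symm e₀) = g i
        rw [hfsymm]
        congr 1
        ring
  set Ψ : (ZMod (Fintype.card D.E) ≃ D.E) → Set D.E × D.E :=
    fun g => (BestAux.lastSet D g r, g 0) with hΨ
  have hinjΨ : Set.InjOn Ψ S := by
    intro g hg g' hg' heq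
    have h1 : BestAux.lastSet D g r = BestAux.lastSet D g' r :=
      congrArg Prod.fst heq
    have h2 : g 0 = g' 0 := congrArg Prod.snd heq
    exact BestAux.circ_det hout hn hg.1 hg'.1 h2 hg.2 h1
  have himgΨ : Ψ '' S = Arb ×ˢ B := by
    apply Set.eq_of_subset_of_subset
    · rintro _ ⟨g, hgS, rfl⟩
      refine Set.mem_prod.mpr ⟨?_, ?_⟩
      · exact BestAux.lastSet_arb hout hn hgS.1 hgS.2
      · exact hgS.2
    · rintro ⟨T, x⟩ hTx
      obtain ⟨hT, hx⟩ := Set.mem_prod.mp hTx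
      obtain ⟨g, hgc, hg0, hlast, hg0x⟩ :=
        BestAux.exists_circ hT hout hbal hx hn
      exact ⟨g, ⟨hgc, hg0⟩, by rw [hΨ]; exact Prod.ext hlast hg0x⟩
  -- counting
  have hprod1 : (A ×ˢ B).ncard = A.ncard * B.ncard := by
    rw [← Nat.card_coe_set_eq, ← Nat.card_coe_set_eq, ← Nat.card_coe_set_eq,
      Nat.card_congr (Equiv.Set.prod A B), Nat.card_prod]
  have hprod2 : (Arb ×ˢ B).ncard = Arb.ncard * B.ncard := by
    rw [← Nat.card_coe_set_eq, ← Nat.card_coe_set_eq, ← Nat.card_coe_set_eq,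
      Nat.card_congr (Equiv.Set.prod Arb B), Nat.card_prod]
  have hBcard : B.ncard = 2 := hout r
  have hcount1 : S.ncard = A.ncard * 2 := by
    rw [← himgΦ, Set.ncard_image_of_injOn hinjΦ, hprod1, hBcard]
  have hcount2 : S.ncard = Arb.ncard * 2 := by
    rw [← Set.ncard_image_of_injOn hinjΨ, himgΨ, hprod2, hBcard]
  have hAe : A.ncard = D.eulerCount e₀ := rfl
  have hArbe : Arb.ncard = D.arbCount r := rfl
  rw [← hAe, ← hArbe]
  have := hcount1.symm.trans hcount2
  omega
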